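/- arXiv:2103.04630 — 3 statements merged into one kernel-verified Lean document; each statement's English description precedes it below -/
import Mathlib

section
/- The Moyal star-product f*g := ∑_{n≥0} ∑_{k_1+k_2=n} ((-1)^{k_2}(iεμ)^n/(2^n k_1! k_2!)) (∂_x^{k_1}∂_y^{k_2} f)(∂_x^{k_2}∂_y^{k_1} g) is associative: for all f, g, h in the algebra of differential polynomials in two space variables, (f*g)*h = f*(g*h). -/
noncomputable section

variable {A : Type} [CommRing A] [Algebra ℂ A]

/-- The algebra `𝒜 := A[[ε,μ]]` of differential polynomials: formal power series in two
variables `ε` (index `0`) and `μ` (index `1`) with coefficients in a commutative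
`ℂ`-algebra `A` (playing the role of `ℂ[[u_{*,*}]]`). -/
abbrev DPoly (A : Type) [CommRing A] := MvPowerSeries (Fin 2) A

/-- Coefficientwise extension of a map `d : A → A` (e.g. `∂_x` or `∂_y`) to `A[[ε,μ]]`;
this matches the fact that `∂_x, ∂_y` do not act on `ε, μ`. -/
def ext (d : A → A) (f : DPoly A) : DPoly A := fun s => d (f s)

/-- The exponent vector of the monomial `εμ`. -/
def epsmu : Fin 2 →₀ ℕ := Finsupp.single 0 1 + Finsupp.single 1 1

/-- The `(k₁,k₂)`-th term `((-1)^{k₂} i^{k₁+k₂} / (2^{k₁+k₂} k₁! k₂!)) •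
(∂_x^{k₁}∂_y^{k₂} f)(∂_x^{k₂}∂_y^{k₁} g)` of the Moyal product (without the `(εμ)^n` factor). -/
def moyalTerm (dx dy : A → A) (f g : DPoly A) (k₁ k₂ : ℕ) : DPoly A :=
  (((-1 : ℂ) ^ k₂ * Complex.I ^ (k₁ + k₂)) / (2 ^ (k₁ + k₂) * k₁.factorial * k₂.factorial)) •
    ((ext dx)^[k₁] ((ext dy)^[k₂] f) * (ext dx)^[k₂] ((ext dy)^[k₁] g))

/-- The Moyal star-product
`f*g := ∑_{n≥0} ∑_{k₁+k₂=n} ((-1)^{k₂} (iεμ)^n / (2^n k₁! k₂!)) (∂_x^{k₁}∂_y^{k₂} f)(∂_x^{k₂}∂_y^{k₁} g)`,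
defined coefficientwise (for a given exponent `s` of `ε^{s 0} μ^{s 1}`, only the terms with
`n ≤ min (s 0) (s 1)` contribute, the factor `(εμ)^n` shifting exponents by `n·(1,1)`). -/
def moyal (dx dy : A → A) (f g : DPoly A) : DPoly A := fun s =>
  ∑ n ∈ Finset.range (min (s 0) (s 1) + 1), ∑ k₁ ∈ Finset.range (n + 1),
    MvPowerSeries.coeff (s - n • epsmu) (moyalTerm dx dy f g k₁ (n - k₁))

/-- Restriction `μ = 0`: keep only the coefficients with `μ`-exponent zero. -/
def setMuZero (f : DPoly A) : PowerSeries A :=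
  PowerSeries.mk fun n => MvPowerSeries.coeff (Finsupp.single 0 n) f

end


/-! ### Auxiliary development -/

set_option linter.unusedSectionVars false
set_option maxHeartbeats 1000000

noncomputable section Aux

open Finset MvPowerSeries

variable {A : Type} [CommRing A] [Algebra ℂ A]


lemma epsmu_apply (i : Fin 2) : epsmu i = 1 := by
  fin_cases i <;> simp [epsmu]

lemma nsmul_epsmu_apply (n : ℕ) (i : Fin 2) : (n • epsmu) i = n := by
  simp [epsmu_apply]

lemma nsmul_epsmu_le {n : ℕ} {s : Fin 2 →₀ ℕ} : n • epsmu ≤ s ↔ n ≤ s 0 ∧ n ≤ s 1 := by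
  rw [Finsupp.le_def]
  constructor
  · intro h; exact ⟨by simpa [nsmul_epsmu_apply] using h 0, by simpa [nsmul_epsmu_apply] using h 1⟩
  · rintro ⟨h0, h1⟩ i; fin_cases i <;> simp [nsmul_epsmu_apply, h0, h1]

lemma coeff_ext (d : A → A) (f : DPoly A) (s : Fin 2 →₀ ℕ) :
    MvPowerSeries.coeff s (ext d f) = d (MvPowerSeries.coeff s f) := rfl

lemma coeff_ext_iterate (d : A → A) (k : ℕ) (f : DPoly A) (s : Fin 2 →₀ ℕ) :
    MvPowerSeries.coeff s ((ext d)^[k] f) = d^[k] (MvPowerSeries.coeff s f) := by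
  induction k generalizing f with
  | zero => rfl
  | succ k ih => rw [Function.iterate_succ_apply, Function.iterate_succ_apply, ih, coeff_ext]

variable (dx dy : Derivation ℂ A A)


lemma ext_add (F G : DPoly A) : ext (⇑dx) (F + G) = ext (⇑dx) F + ext (⇑dx) G := by
  funext s; exact map_add dx _ _

lemma ext_smul (c : ℂ) (F : DPoly A) : ext (⇑dx) (c • F) = c • ext (⇑dx) F := by
  funext s; exact dx.map_smul c _

lemma ext_nsmul (n : ℕ) (F : DPoly A) : ext (⇑dx) (n • F) = n • ext (⇑dx) F := by
  funext s; exact map_nsmul dx.toLinearMap n _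

lemma ext_sum {ι : Type*} (t : Finset ι) (F : ι → DPoly A) :
    ext (⇑dx) (∑ i ∈ t, F i) = ∑ i ∈ t, ext (⇑dx) (F i) := by
  funext s
  show dx ((∑ i ∈ t, F i) s) = _
  have : (∑ i ∈ t, F i) s = ∑ i ∈ t, F i s := by
    exact Finset.sum_apply s t F
  rw [this, map_sum]
  exact (Finset.sum_apply s t (fun i => ext (⇑dx) (F i))).symm

lemma ext_mul (F G : DPoly A) :
    ext (⇑dx) (F * G) = ext (⇑dx) F * G + F * ext (⇑dx) G := by
  classical
  apply MvPowerSeries.ext; intro s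
  rw [map_add, MvPowerSeries.coeff_mul]
  show dx (MvPowerSeries.coeff s (F * G)) = _
  rw [MvPowerSeries.coeff_mul, map_sum, MvPowerSeries.coeff_mul, ← Finset.sum_add_distrib]
  refine Finset.sum_congr rfl fun p _ => ?_
  rw [Derivation.leibniz]
  show F p.1 * dx (G p.2) + G p.2 * dx (F p.1) = dx (F p.1) * G p.2 + F p.1 * dx (G p.2)
  ring

variable (hcomm : ∀ a : A, dx (dy a) = dy (dx a))

include hcomm in
lemma ext_comm : Function.Commute (ext (⇑dx)) (ext (⇑dy)) :=
  fun F => funext fun s => hcomm (F s)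

open Finset Nat in
lemma ext_iterate_mul (k : ℕ) (F G : DPoly A) :
    (ext (⇑dx))^[k] (F * G)
      = ∑ ij ∈ antidiagonal k, choose k ij.1 • ((ext (⇑dx))^[ij.1] F * (ext (⇑dx))^[ij.2] G) := by
  induction k with
  | zero => simp
  | succ n ih =>
    rw [sum_antidiagonal_choose_succ_nsmul
      (M := DPoly A) (fun i j => (ext (⇑dx))^[i] F * (ext (⇑dx))^[j] G) n]
    rw [Function.iterate_succ_apply', ih, ext_sum]
    simp only [ext_nsmul, ext_mul, smul_add, sum_add_distrib]
    rw [add_comm]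
    congr 1
    · refine sum_congr rfl fun ⟨i, j⟩ hij => ?_
      rw [← Function.iterate_succ_apply' (ext (⇑dx)) j G]
    · refine sum_congr rfl fun ⟨i, j⟩ hij => ?_
      rw [n.choose_symm_of_eq_add (mem_antidiagonal.1 hij).symm,
        ← Function.iterate_succ_apply' (ext (⇑dx)) i F]

open Finset Nat in
lemma ext_iterate_mul' (k : ℕ) (F G : DPoly A) :
    (ext (⇑dx))^[k] (F * G)
      = ∑ i ∈ range (k + 1), choose k i • ((ext (⇑dx))^[i] F * (ext (⇑dx))^[k - i] G) := by
  rw [ext_iterate_mul]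
  exact sum_antidiagonal_eq_sum_range_succ
    (fun i j => choose k i • ((ext (⇑dx))^[i] F * (ext (⇑dx))^[j] G)) k

lemma ext_iterate_sum {ι : Type*} (k : ℕ) (t : Finset ι) (F : ι → DPoly A) :
    (ext (⇑dx))^[k] (∑ i ∈ t, F i) = ∑ i ∈ t, (ext (⇑dx))^[k] (F i) := by
  induction k with
  | zero => rfl
  | succ n ih =>
    rw [Function.iterate_succ_apply', ih, ext_sum]
    exact Finset.sum_congr rfl fun i _ => (Function.iterate_succ_apply' _ _ _).symm

lemma ext_iterate_smul (k : ℕ) (c : ℂ) (F : DPoly A) :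
    (ext (⇑dx))^[k] (c • F) = c • (ext (⇑dx))^[k] F := by
  induction k with
  | zero => rfl
  | succ n ih =>
    rw [Function.iterate_succ_apply', ih, ext_smul,
      ← Function.iterate_succ_apply' (ext (⇑dx)) n F]

lemma ext_iterate_nsmul (k : ℕ) (n : ℕ) (F : DPoly A) :
    (ext (⇑dx))^[k] (n • F) = n • (ext (⇑dx))^[k] F := by
  induction k with
  | zero => rfl
  | succ m ih =>
    rw [Function.iterate_succ_apply', ih, ext_nsmul,
      ← Function.iterate_succ_apply' (ext (⇑dx)) m F]

/-- `∂_x^a ∂_y^b` on `A[[ε,μ]]`. -/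
def Dxy (a b : ℕ) (F : DPoly A) : DPoly A := (ext (⇑dx))^[a] ((ext (⇑dy))^[b] F)

include hcomm in
lemma Dxy_Dxy (a b c d : ℕ) (F : DPoly A) :
    Dxy dx dy a b (Dxy dx dy c d F) = Dxy dx dy (a + c) (b + d) F := by
  unfold Dxy
  have h : ∀ Z, (ext (⇑dy))^[b] ((ext (⇑dx))^[c] Z) = (ext (⇑dx))^[c] ((ext (⇑dy))^[b] Z) :=
    fun Z => ((ext_comm dx dy hcomm).symm.iterate_iterate b c) Z
  rw [h, ← Function.iterate_add_apply, ← Function.iterate_add_apply]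

include hcomm in
lemma Dxy_mul (k l : ℕ) (F G : DPoly A) :
    Dxy dx dy k l (F * G)
      = ∑ i ∈ Finset.range (k + 1), ∑ j ∈ Finset.range (l + 1),
          (k.choose i * l.choose j) •
            (Dxy dx dy i j F * Dxy dx dy (k - i) (l - j) G) := by
  unfold Dxy
  rw [ext_iterate_mul' dy l F G, ext_iterate_sum]
  rw [Finset.sum_comm]
  refine Finset.sum_congr rfl fun j hj => ?_
  rw [ext_iterate_nsmul, ext_iterate_mul' dx k]
  rw [Finset.smul_sum]
  refine Finset.sum_congr rfl fun i hi => ?_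
  rw [smul_smul, Nat.mul_comm]

lemma Dxy_sum {ι : Type*} (a b : ℕ) (t : Finset ι) (F : ι → DPoly A) :
    Dxy dx dy a b (∑ i ∈ t, F i) = ∑ i ∈ t, Dxy dx dy a b (F i) := by
  unfold Dxy; rw [ext_iterate_sum dy, ext_iterate_sum dx]

lemma Dxy_smul (a b : ℕ) (c : ℂ) (F : DPoly A) :
    Dxy dx dy a b (c • F) = c • Dxy dx dy a b F := by
  unfold Dxy; rw [ext_iterate_smul dy, ext_iterate_smul dx]

include hcomm in
lemma Dxy_mul' (k l : ℕ) (F G : DPoly A) :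
    Dxy dx dy k l (F * G)
      = ∑ i ∈ Finset.range (k + 1), ∑ j ∈ Finset.range (l + 1),
          ((k.choose i : ℂ) * (l.choose j : ℂ)) •
            (Dxy dx dy i j F * Dxy dx dy (k - i) (l - j) G) := by
  rw [Dxy_mul dx dy hcomm]
  refine Finset.sum_congr rfl fun i _ => Finset.sum_congr rfl fun j _ => ?_
  rw [← Nat.cast_smul_eq_nsmul ℂ, Nat.cast_mul]

/-- scalar of `moyalTerm`. -/
def cMT (k₁ k₂ : ℕ) : ℂ :=
  ((-1 : ℂ) ^ k₂ * Complex.I ^ (k₁ + k₂)) / (2 ^ (k₁ + k₂) * k₁.factorial * k₂.factorial)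

def moyalTerm' (f g : DPoly A) (k₁ k₂ : ℕ) : DPoly A :=
  cMT k₁ k₂ • (Dxy dx dy k₁ k₂ f * Dxy dx dy k₂ k₁ g)

/-- `n`-th term of the star product (without the `(εμ)ⁿ`). -/
def Bq (n : ℕ) (f g : DPoly A) : DPoly A :=
  ∑ k ∈ Finset.range (n + 1), moyalTerm' dx dy f g k (n - k)

include hcomm in
lemma expandL (f g h : DPoly A) (q k l : ℕ) :
    moyalTerm' dx dy (Bq dx dy q f g) h k l
      = ∑ m ∈ Finset.range (q+1), ∑ i ∈ Finset.range (k+1), ∑ j ∈ Finset.range (l+1),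
          (cMT k l * (cMT m (q-m) * ((k.choose i : ℂ) * (l.choose j : ℂ)))) •
            (Dxy dx dy (i+m) (j+(q-m)) f *
              (Dxy dx dy ((k-i)+(q-m)) ((l-j)+m) g * Dxy dx dy l k h)) := by
  rw [moyalTerm', Bq, Dxy_sum]
  simp only [moyalTerm', Dxy_smul, Dxy_mul' dx dy hcomm, Dxy_Dxy dx dy hcomm]
  simp only [Finset.sum_mul, smul_mul_assoc, Finset.smul_sum, smul_smul, mul_assoc]

include hcomm in
lemma expandR (f g h : DPoly A) (q k l : ℕ) :
    moyalTerm' dx dy f (Bq dx dy q g h) k l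
      = ∑ m ∈ Finset.range (q+1), ∑ i ∈ Finset.range (l+1), ∑ j ∈ Finset.range (k+1),
          (cMT k l * (cMT m (q-m) * ((l.choose i : ℂ) * (k.choose j : ℂ)))) •
            (Dxy dx dy k l f *
              (Dxy dx dy (i+m) (j+(q-m)) g * Dxy dx dy ((l-i)+(q-m)) ((k-j)+m) h)) := by
  rw [moyalTerm', Bq, Dxy_sum]
  simp only [moyalTerm', Dxy_smul, Dxy_mul' dx dy hcomm, Dxy_Dxy dx dy hcomm]
  simp only [Finset.mul_sum, mul_smul_comm, Finset.smul_sum, smul_smul, mul_assoc]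

lemma cast_choose_eq (a b : ℕ) :
    (((a+b).choose a : ℕ) : ℂ) = (a+b).factorial / (a.factorial * b.factorial) := by
  rw [Nat.cast_choose ℂ (Nat.le_add_right a b), Nat.add_sub_cancel_left]

lemma cMT_key (m r i i' j j' : ℕ) :
    cMT (i+i') (j+j') * (cMT m r * ((((i+i').choose i : ℕ) : ℂ) * (((j+j').choose j : ℕ) : ℂ)))
      = cMT (m+i) (r+j) * (cMT i' j' * ((((r+j).choose r : ℕ) : ℂ) * (((m+i).choose m : ℕ) : ℂ))) := by
  have hf : ∀ n : ℕ, ((n.factorial : ℕ) : ℂ) ≠ 0 :=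
    fun n => Nat.cast_ne_zero.2 n.factorial_ne_zero
  rw [cast_choose_eq i i', cast_choose_eq j j', cast_choose_eq r j, cast_choose_eq m i]
  unfold cMT
  rw [div_mul_div_comm, div_mul_div_comm, div_mul_div_comm,
      div_mul_div_comm, div_mul_div_comm, div_mul_div_comm]
  rw [div_eq_div_iff]
  · ring
  · repeat' apply mul_ne_zero
    all_goals first
      | exact hf _
      | exact pow_ne_zero _ (two_ne_zero)
  · repeat' apply mul_ne_zero
    all_goals first
      | exact hf _
      | exact pow_ne_zero _ (two_ne_zero)

lemma sum5_sigma {M : Type*} [AddCommMonoid M] (s1 : Finset ℕ) (s2 : ℕ → Finset ℕ)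
    (s3 : ℕ → ℕ → Finset ℕ) (s4 : ℕ → ℕ → ℕ → Finset ℕ) (s5 : ℕ → ℕ → ℕ → ℕ → Finset ℕ)
    (F : ℕ → ℕ → ℕ → ℕ → ℕ → M) :
    (∑ q ∈ s1, ∑ k ∈ s2 q, ∑ m ∈ s3 q k, ∑ i ∈ s4 q k m, ∑ j ∈ s5 q k m i, F q k m i j)
      = ∑ x ∈ (((s1.sigma s2).sigma (fun y => s3 y.1 y.2)).sigma
            (fun y => s4 y.1.1 y.1.2 y.2)).sigma
            (fun y => s5 y.1.1.1 y.1.1.2 y.1.2 y.2),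
          F x.1.1.1.1 x.1.1.1.2 x.1.1.2 x.1.2 x.2 := by
  rw [Finset.sum_sigma', Finset.sum_sigma', Finset.sum_sigma', Finset.sum_sigma']

include hcomm in
lemma core (f g h : DPoly A) (N : ℕ) :
    (∑ q ∈ Finset.range (N+1), ∑ k ∈ Finset.range (N-q+1),
        moyalTerm' dx dy (Bq dx dy q f g) h k (N-q-k))
      = ∑ q ∈ Finset.range (N+1), ∑ k ∈ Finset.range (N-q+1),
          moyalTerm' dx dy f (Bq dx dy q g h) k (N-q-k) := by
  simp only [expandL dx dy hcomm, expandR dx dy hcomm]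
  rw [sum5_sigma, sum5_sigma]
  refine Finset.sum_nbij'
    (fun x => ⟨⟨⟨⟨N - x.1.1.1.1 - x.1.2 - x.2, x.1.1.2 + x.1.2⟩, x.1.1.1.2 - x.1.2⟩,
      x.1.1.1.1 - x.1.1.2⟩, x.1.1.2⟩)
    (fun x => ⟨⟨⟨⟨x.1.2 + x.2, x.1.1.2 + (x.1.1.1.2 - x.2)⟩, x.2⟩, x.1.1.1.2 - x.2⟩,
      N - x.1.1.1.1 - x.1.1.1.2 - x.1.2⟩)
    ?_ ?_ ?_ ?_ ?_
  · rintro ⟨⟨⟨⟨q, k⟩, m⟩, i⟩, j⟩ hx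
    simp only [Finset.mem_sigma, Finset.mem_range] at hx ⊢
    omega
  · rintro ⟨⟨⟨⟨q, k⟩, m⟩, i⟩, j⟩ hx
    simp only [Finset.mem_sigma, Finset.mem_range] at hx ⊢
    omega
  · rintro ⟨⟨⟨⟨q, k⟩, m⟩, i⟩, j⟩ hx
    simp only [Finset.mem_sigma, Finset.mem_range] at hx
    simp only [Sigma.mk.inj_iff, heq_eq_eq, and_true, true_and]
    omega
  · rintro ⟨⟨⟨⟨q, k⟩, m⟩, i⟩, j⟩ hx
    simp only [Finset.mem_sigma, Finset.mem_range] at hx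
    simp only [Sigma.mk.inj_iff, heq_eq_eq, and_true, true_and]
    omega
  · rintro ⟨⟨⟨⟨q, k⟩, m⟩, i⟩, j⟩ hx
    simp only [Finset.mem_sigma, Finset.mem_range] at hx
    obtain ⟨⟨⟨⟨hq, hk⟩, hm⟩, hi⟩, hj⟩ := hx
    simp only []
    obtain ⟨r, hr⟩ : ∃ v, q - m = v := ⟨_, rfl⟩
    obtain ⟨i', hi'⟩ : ∃ v, k - i = v := ⟨_, rfl⟩
    obtain ⟨j', hj'⟩ : ∃ v, N - q - k - j = v := ⟨_, rfl⟩
    have e5 : N - (N - q - i - j) - (m + i) = r + j := by omega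
    have e7 : N - q - i - j = i' + j' := by omega
    rw [e5, e7, hj']
    have e1 : N - q - k = j + j' := by omega
    rw [e1, hr, hi']
    have e8 : i' + j' - i' = j' := by omega
    have e9 : r + j - r = j := by omega
    have e10 : m + i - m = i := by omega
    rw [e8, e9, e10]
    have e6 : k = i + i' := by omega
    rw [e6]
    rw [Nat.add_comm i m, Nat.add_comm j r, Nat.add_comm i' r, Nat.add_comm j' m]
    rw [cMT_key m r i i' j j']

/-! ### Part I: power series bookkeeping -/

lemma moyalTerm'_def (f g : DPoly A) (k₁ k₂ : ℕ) :
    moyalTerm' dx dy f g k₁ k₂ = moyalTerm (⇑dx) (⇑dy) f g k₁ k₂ := rfl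

/-- `F` is represented by the sequence `T` (as `F = ∑ₙ (εμ)ⁿ • T n`). -/
def MRep (F : DPoly A) (T : ℕ → DPoly A) : Prop :=
  ∀ s : Fin 2 →₀ ℕ, MvPowerSeries.coeff s F
    = ∑ n ∈ Finset.range (min (s 0) (s 1) + 1),
        MvPowerSeries.coeff (s - n • epsmu) (T n)

lemma finsupp2_ext {a b : Fin 2 →₀ ℕ} (h0 : a 0 = b 0) (h1 : a 1 = b 1) : a = b := by
  refine Finsupp.ext fun i => ?_
  fin_cases i
  · exact h0
  · exact h1

lemma moyal_rep (F G : DPoly A) :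
    MRep (moyal (⇑dx) (⇑dy) F G) (fun n => Bq dx dy n F G) := by
  intro s
  rw [MvPowerSeries.coeff_apply]
  show (∑ n ∈ Finset.range (min (s 0) (s 1) + 1), ∑ k₁ ∈ Finset.range (n + 1),
      MvPowerSeries.coeff (s - n • epsmu) (moyalTerm (⇑dx) (⇑dy) F G k₁ (n - k₁))) = _
  refine Finset.sum_congr rfl fun n _ => ?_
  simp only [Bq]
  rw [map_sum]
  exact Finset.sum_congr rfl fun k _ => by rw [moyalTerm'_def]

lemma rep_mul {F : DPoly A} {T : ℕ → DPoly A} (hF : MRep F T) (W : DPoly A) :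
    MRep (F * W) (fun n => T n * W) := by
  classical
  intro t
  rw [MvPowerSeries.coeff_mul]
  have step1 : ∀ p : (Fin 2 →₀ ℕ) × (Fin 2 →₀ ℕ),
      MvPowerSeries.coeff p.1 F * MvPowerSeries.coeff p.2 W
        = ∑ n ∈ Finset.range (min (p.1 0) (p.1 1) + 1),
            MvPowerSeries.coeff (p.1 - n • epsmu) (T n) * MvPowerSeries.coeff p.2 W := by
    intro p; rw [hF p.1, Finset.sum_mul]
  rw [Finset.sum_congr rfl fun p _ => step1 p]
  rw [Finset.sum_sigma']
  have target : ∀ n ∈ Finset.range (min (t 0) (t 1) + 1),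
      MvPowerSeries.coeff (t - n • epsmu) ((fun n => T n * W) n)
        = ∑ p ∈ Finset.HasAntidiagonal.antidiagonal (t - n • epsmu),
            MvPowerSeries.coeff p.1 (T n) * MvPowerSeries.coeff p.2 W :=
    fun n _ => MvPowerSeries.coeff_mul _ _ _
  rw [Finset.sum_congr rfl target, Finset.sum_sigma']
  refine Finset.sum_nbij'
    (fun x => ⟨x.2, (x.1.1 - x.2 • epsmu, x.1.2)⟩)
    (fun y => ⟨(y.2.1 + y.1 • epsmu, y.2.2), y.1⟩) ?_ ?_ ?_ ?_ ?_
  · rintro ⟨⟨u, v⟩, n⟩ hx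
    simp only [Finset.mem_sigma, Finset.HasAntidiagonal.mem_antidiagonal, Finset.mem_range] at hx ⊢
    obtain ⟨huv, hn⟩ := hx
    have h0 : u 0 + v 0 = t 0 := by rw [← Finsupp.add_apply, huv]
    have h1 : u 1 + v 1 = t 1 := by rw [← Finsupp.add_apply, huv]
    constructor
    · omega
    · refine finsupp2_ext ?_ ?_ <;>
        simp only [Finsupp.add_apply, Finsupp.tsub_apply, nsmul_epsmu_apply] <;> omega
  · rintro ⟨n, u, v⟩ hy
    simp only [Finset.mem_sigma, Finset.HasAntidiagonal.mem_antidiagonal, Finset.mem_range] at hy ⊢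
    obtain ⟨hn, huv⟩ := hy
    have h0 : u 0 + v 0 = t 0 - n := by
      rw [← Finsupp.add_apply, huv, Finsupp.tsub_apply, nsmul_epsmu_apply]
    have h1 : u 1 + v 1 = t 1 - n := by
      rw [← Finsupp.add_apply, huv, Finsupp.tsub_apply, nsmul_epsmu_apply]
    constructor
    · refine finsupp2_ext ?_ ?_ <;>
        simp only [Finsupp.add_apply, nsmul_epsmu_apply] <;> omega
    · simp only [Finsupp.add_apply, nsmul_epsmu_apply]
      omega
  · rintro ⟨⟨u, v⟩, n⟩ hx
    simp only [Finset.mem_sigma, Finset.HasAntidiagonal.mem_antidiagonal, Finset.mem_range] at hx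
    obtain ⟨huv, hn⟩ := hx
    have h0 : u 0 + v 0 = t 0 := by rw [← Finsupp.add_apply, huv]
    have h1 : u 1 + v 1 = t 1 := by rw [← Finsupp.add_apply, huv]
    have : u - n • epsmu + n • epsmu = u := by
      refine finsupp2_ext ?_ ?_ <;>
        simp only [Finsupp.add_apply, Finsupp.tsub_apply, nsmul_epsmu_apply] <;> omega
    simp only [this]
  · rintro ⟨n, u, v⟩ hy
    simp only [Finset.mem_sigma, Finset.HasAntidiagonal.mem_antidiagonal, Finset.mem_range] at hy
    have : u + n • epsmu - n • epsmu = u := by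
      refine finsupp2_ext ?_ ?_ <;>
        simp only [Finsupp.add_apply, Finsupp.tsub_apply, nsmul_epsmu_apply] <;> omega
    simp only [this]
  · rintro ⟨⟨u, v⟩, n⟩ hx
    rfl

lemma rep_mul_left {F : DPoly A} {T : ℕ → DPoly A} (hF : MRep F T) (W : DPoly A) :
    MRep (W * F) (fun n => W * T n) := by
  intro t
  rw [mul_comm W F, rep_mul hF W t]
  exact Finset.sum_congr rfl fun n _ => congrArg _ (mul_comm (T n) W)

lemma rep_ext (d : Derivation ℂ A A) {F : DPoly A} {T : ℕ → DPoly A} (hF : MRep F T) :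
    MRep (ext (⇑d) F) (fun n => ext (⇑d) (T n)) := by
  intro s
  rw [coeff_ext, hF s, map_sum d]
  exact Finset.sum_congr rfl fun n _ => (coeff_ext (⇑d) (T n) _).symm

lemma rep_iter (d : Derivation ℂ A A) (k : ℕ) {F : DPoly A} {T : ℕ → DPoly A} (hF : MRep F T) :
    MRep ((ext (⇑d))^[k] F) (fun n => (ext (⇑d))^[k] (T n)) := by
  induction k generalizing F T with
  | zero => exact hF
  | succ m ih =>
    have := rep_ext d (ih hF)
    simp only [← Function.iterate_succ_apply' (ext (⇑d))] at this
    exact this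

lemma rep_smul (c : ℂ) {F : DPoly A} {T : ℕ → DPoly A} (hF : MRep F T) :
    MRep (c • F) (fun n => c • T n) := by
  intro s
  have h1 : MvPowerSeries.coeff s (c • F) = c • MvPowerSeries.coeff s F := rfl
  rw [h1, hF s, Finset.smul_sum]
  exact Finset.sum_congr rfl fun n _ => rfl

lemma rep_moyalTermL {F : DPoly A} {T : ℕ → DPoly A} (hF : MRep F T) (G : DPoly A) (k l : ℕ) :
    MRep (moyalTerm' dx dy F G k l) (fun n => moyalTerm' dx dy (T n) G k l) :=
  rep_smul (cMT k l) (rep_mul (rep_iter dx k (rep_iter dy l hF)) (Dxy dx dy l k G))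

lemma rep_moyalTermR {G : DPoly A} {T : ℕ → DPoly A} (hG : MRep G T) (F : DPoly A) (k l : ℕ) :
    MRep (moyalTerm' dx dy F G k l) (fun n => moyalTerm' dx dy F (T n) k l) :=
  rep_smul (cMT k l) (rep_mul_left (rep_iter dx l (rep_iter dy k hG)) (Dxy dx dy k l F))

lemma sum3_sigma {M : Type*} [AddCommMonoid M] (s1 : Finset ℕ) (s2 : ℕ → Finset ℕ)
    (s3 : ℕ → ℕ → Finset ℕ) (F : ℕ → ℕ → ℕ → M) :
    (∑ p ∈ s1, ∑ k ∈ s2 p, ∑ n ∈ s3 p k, F p k n)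
      = ∑ x ∈ (s1.sigma s2).sigma (fun y => s3 y.1 y.2), F x.1.1 x.1.2 x.2 := by
  rw [Finset.sum_sigma', Finset.sum_sigma']

lemma key (F G : DPoly A) (U : ℕ → ℕ → ℕ → DPoly A)
    (hU : ∀ k l, MRep (moyalTerm' dx dy F G k l) (fun n => U n k l)) :
    MRep (moyal (⇑dx) (⇑dy) F G)
      (fun N => ∑ q ∈ Finset.range (N+1), ∑ k ∈ Finset.range (N-q+1), U q k (N-q-k)) := by
  intro s
  rw [MvPowerSeries.coeff_apply]
  show (∑ p ∈ Finset.range (min (s 0) (s 1) + 1), ∑ k ∈ Finset.range (p + 1),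
      MvPowerSeries.coeff (s - p • epsmu) (moyalTerm (⇑dx) (⇑dy) F G k (p - k))) = _
  have inner : ∀ p ∈ Finset.range (min (s 0) (s 1) + 1), ∀ k ∈ Finset.range (p + 1),
      MvPowerSeries.coeff (s - p • epsmu) (moyalTerm (⇑dx) (⇑dy) F G k (p - k))
        = ∑ n ∈ Finset.range (min (s 0) (s 1) - p + 1),
            MvPowerSeries.coeff (s - (p + n) • epsmu) (U n k (p - k)) := by
    intro p hp k _
    rw [← moyalTerm'_def, hU k (p - k) (s - p • epsmu)]
    simp only [Finset.mem_range] at hp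
    have hm : min ((s - p • epsmu) 0) ((s - p • epsmu) 1) = min (s 0) (s 1) - p := by
      simp only [Finsupp.tsub_apply, nsmul_epsmu_apply]
      omega
    rw [hm]
    refine Finset.sum_congr rfl fun n hn => ?_
    have harg : s - p • epsmu - n • epsmu = s - (p + n) • epsmu := by
      refine finsupp2_ext ?_ ?_ <;>
        simp only [Finsupp.tsub_apply, nsmul_epsmu_apply] <;> omega
    rw [harg]
  refine Eq.trans (Finset.sum_congr rfl fun p hp =>
    Finset.sum_congr rfl fun k hk => inner p hp k hk) ?_
  have hR : ∀ N : ℕ,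
      MvPowerSeries.coeff (s - N • epsmu)
          (∑ q ∈ Finset.range (N+1), ∑ k ∈ Finset.range (N-q+1), U q k (N-q-k))
        = ∑ q ∈ Finset.range (N+1), ∑ k ∈ Finset.range (N-q+1),
            MvPowerSeries.coeff (s - N • epsmu) (U q k (N-q-k)) := by
    intro N
    rw [map_sum]
    exact Finset.sum_congr rfl fun q _ => by rw [map_sum]
  refine Eq.trans ?_ (Finset.sum_congr rfl fun N _ => (hR N).symm)
  rw [sum3_sigma, sum3_sigma]
  refine Finset.sum_nbij'
    (fun x => ⟨⟨x.1.1 + x.2, x.2⟩, x.1.2⟩)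
    (fun x => ⟨⟨x.1.1 - x.1.2, x.2⟩, x.1.2⟩) ?_ ?_ ?_ ?_ ?_
  · rintro ⟨⟨p, k⟩, n⟩ hx
    simp only [Finset.mem_sigma, Finset.mem_range] at hx ⊢
    omega
  · rintro ⟨⟨N, q⟩, k⟩ hx
    simp only [Finset.mem_sigma, Finset.mem_range] at hx ⊢
    omega
  · rintro ⟨⟨p, k⟩, n⟩ hx
    simp only [Finset.mem_sigma, Finset.mem_range] at hx
    simp only [Sigma.mk.inj_iff, heq_eq_eq, and_true, true_and]
    omega
  · rintro ⟨⟨N, q⟩, k⟩ hx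
    simp only [Finset.mem_sigma, Finset.mem_range] at hx
    simp only [Sigma.mk.inj_iff, heq_eq_eq, and_true, true_and]
    omega
  · rintro ⟨⟨p, k⟩, n⟩ hx
    simp only [Finset.mem_sigma, Finset.mem_range] at hx
    simp only []
    rw [show p + n - n - k = p - k from by omega]

end Aux

/-- The Moyal star-product is associative: for commuting (ℂ-linear)
derivations `∂_x, ∂_y` of `A` and all `f, g, h` in the algebra `A[[ε,μ]]` of differential
polynomials in two space variables, `(f*g)*h = f*(g*h)`. -/
theorem stmt7 {A : Type} [CommRing A] [Algebra ℂ A] (dx dy : Derivation ℂ A A)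
    (hcomm : ∀ a : A, dx (dy a) = dy (dx a)) (f g h : DPoly A) :
    moyal (⇑dx) (⇑dy) (moyal (⇑dx) (⇑dy) f g) h =
      moyal (⇑dx) (⇑dy) f (moyal (⇑dx) (⇑dy) g h) := by
  have h1 : MRep (moyal (⇑dx) (⇑dy) f g) (fun n => Bq dx dy n f g) := moyal_rep dx dy f g
  have h2 : MRep (moyal (⇑dx) (⇑dy) g h) (fun n => Bq dx dy n g h) := moyal_rep dx dy g h
  have KL := key dx dy (moyal (⇑dx) (⇑dy) f g) h
    (fun n k l => moyalTerm' dx dy (Bq dx dy n f g) h k l)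
    (fun k l => rep_moyalTermL dx dy h1 h k l)
  have KR := key dx dy f (moyal (⇑dx) (⇑dy) g h)
    (fun n k l => moyalTerm' dx dy f (Bq dx dy n g h) k l)
    (fun k l => rep_moyalTermR dx dy h2 f k l)
  apply MvPowerSeries.ext
  intro s
  rw [KL s, KR s]
  exact Finset.sum_congr rfl fun N _ => congrArg _ (core dx dy hcomm f g h N)
end

section
/- In the algebra of pseudo-differential operators ∑_{i≤n} a_i * ∂_x^i with composition (a*∂_x^i)∘(b*∂_x^j) := ∑_{k≥0} binom(i,k) (a * ∂_x^k b) * ∂_x^{i+j-k}, any operator of the form A = ∂_x^2 + ∑_{i<2} a_i*∂_x^i has a unique square root of the form B = ∂_x + ∑_{i<1} b_i*∂_x^i, i.e., a unique such B with B∘B = A. -/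
noncomputable section

/-- The generalized binomial coefficient `binom(i,k) = i(i-1)⋯(i-k+1)/k!` for `i : ℤ`, `k : ℕ`. -/
def zbinom (i : ℤ) (k : ℕ) : ℚ :=
  (∏ j ∈ Finset.range k, ((i : ℚ) - j)) / k.factorial

/-- A pseudo-differential operator `∑_{i ≤ n} a_i * ∂_x^i` is recorded by its coefficient
function `ℤ → C`; operators are required to have support bounded above when relevant. -/
abbrev PDO (C : Type) := ℤ → C

/-- Composition of pseudo-differential operators, induced by
`(a*∂_x^i)∘(b*∂_x^j) := ∑_{k≥0} binom(i,k) (a * ∂_x^k b) * ∂_x^{i+j-k}`: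
the coefficient of `∂_x^m` in `A ∘ B` is `∑_{p,q, k=p+q-m ≥ 0} binom(p,k) · A_p * d^k(B_q)`
(a finite sum when the supports of `A` and `B` are bounded above; `finsum` makes this
well defined). Here `d` is the derivation `∂_x` of the coefficient algebra `C` (e.g. the
Moyal star-product algebra `ℂ[[u_{*,*},μ]][[ε,ε⁻¹]`). -/
def PDO.comp {C : Type} [Ring C] [Algebra ℚ C] (d : C → C) (A B : PDO C) : PDO C :=
  fun m =>
    ∑ᶠ pq : ℤ × ℤ,
      if 0 ≤ pq.1 + pq.2 - m then
        zbinom pq.1 (pq.1 + pq.2 - m).toNat • (A pq.1 * d^[(pq.1 + pq.2 - m).toNat] (B pq.2))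
      else 0

namespace Stmt10Aux

variable {C : Type} [Ring C] [Algebra ℚ C]

lemma zbinom_zero (i : ℤ) : zbinom i 0 = 1 := by
  simp [zbinom]

/-- The generic term of the composition sum. -/
def term (d : C → C) (B : PDO C) (m : ℤ) (pq : ℤ × ℤ) : C :=
  if 0 ≤ pq.1 + pq.2 - m then
    zbinom pq.1 (pq.1 + pq.2 - m).toNat • (B pq.1 * d^[(pq.1 + pq.2 - m).toNat] (B pq.2))
  else 0

/-- The part of the composition sum that involves only coefficients of index `≥ m`. -/
def Rsum (d : C → C) (B : PDO C) (m : ℤ) : C :=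
  ∑ pq ∈ Finset.Icc m 1 ×ˢ Finset.Icc m 1, term d B m pq

lemma Rsum_congr (d : C → C) (B B' : PDO C) (m : ℤ)
    (h : ∀ j, m ≤ j → j ≤ 1 → B j = B' j) : Rsum d B m = Rsum d B' m := by
  unfold Rsum
  refine Finset.sum_congr rfl fun pq hpq => ?_
  simp only [Finset.mem_product, Finset.mem_Icc] at hpq
  unfold term
  rw [h pq.1 hpq.1.1 hpq.1.2, h pq.2 hpq.2.1 hpq.2.2]

/-- One step of the recursion defining the square root. -/
def step (d : C → C) (A : PDO C) (B : PDO C) : PDO C := fun i =>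
  if 1 ≤ i then (if i = 1 then 1 else 0)
  else (2⁻¹ : ℚ) • (A (i + 1) - Rsum d B (i + 1))

lemma step_apply_high (d : C → C) (A : PDO C) (B : PDO C) (i : ℤ) (hi : 1 ≤ i) :
    step d A B i = if i = 1 then 1 else 0 := by
  unfold step; rw [if_pos hi]

lemma step_apply_low (d : C → C) (A : PDO C) (B : PDO C) (i : ℤ) (hi : ¬ 1 ≤ i) :
    step d A B i = (2⁻¹ : ℚ) • (A (i + 1) - Rsum d B (i + 1)) := by
  unfold step; rw [if_neg hi]

lemma step_congr (d : C → C) (A : PDO C) (B B' : PDO C) (i : ℤ)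
    (h : ∀ j : ℤ, i + 1 ≤ j → B j = B' j) : step d A B i = step d A B' i := by
  by_cases h1 : 1 ≤ i
  · rw [step_apply_high d A B i h1, step_apply_high d A B' i h1]
  · rw [step_apply_low d A B i h1, step_apply_low d A B' i h1,
      Rsum_congr d B B' (i + 1) fun j hj _ => h j hj]

lemma agree (d : C → C) (A : PDO C) :
    ∀ n : ℕ, ∀ B B' : PDO C, ∀ i : ℤ, 1 - (n : ℤ) ≤ i →
      (step d A)^[n + 1] B i = (step d A)^[n + 1] B' i := by
  intro n
  induction n with
  | zero =>
    intro B B' i hi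
    simp only [Nat.cast_zero, sub_zero] at hi
    show step d A B i = step d A B' i
    rw [step_apply_high d A B i hi, step_apply_high d A B' i hi]
  | succ n ih =>
    intro B B' i hi
    rw [Function.iterate_succ_apply' (step d A) (n + 1),
      Function.iterate_succ_apply' (step d A) (n + 1)]
    refine step_congr d A _ _ i fun j hj => ih B B' j ?_
    push_cast at hi ⊢
    omega

/-- The square root, defined by iterating `step` sufficiently many times. -/
def Bfix (d : C → C) (A : PDO C) : PDO C :=
  fun i => (step d A)^[(2 - i).toNat] (fun _ => 0) i

lemma Bfix_eq_iter (d : C → C) (A : PDO C) (n : ℕ) (i : ℤ) (hi : i ≤ 1)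
    (h : 1 - (n : ℤ) ≤ i) :
    Bfix d A i = (step d A)^[n + 1] (fun _ => 0) i := by
  have h2 : (2 - i).toNat = (1 - i).toNat + 1 := by omega
  have hk : ∃ k : ℕ, n = (1 - i).toNat + k := ⟨n - (1 - i).toNat, by omega⟩
  obtain ⟨k, rfl⟩ := hk
  unfold Bfix
  rw [h2]
  rw [show (1 - i).toNat + k + 1 = ((1 - i).toNat + 1) + k by ring,
    Function.iterate_add_apply (step d A) ((1 - i).toNat + 1) k (fun _ => 0)]
  exact agree d A (1 - i).toNat _ _ i (by omega)

lemma Bfix_one (d : C → C) (A : PDO C) : Bfix d A 1 = 1 := by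
  show (step d A)^[(2 - 1 : ℤ).toNat] (fun _ => 0) 1 = 1
  norm_num
  rw [step_apply_high d A _ 1 le_rfl, if_pos rfl]

lemma Bfix_top (d : C → C) (A : PDO C) (i : ℤ) (hi : 1 < i) : Bfix d A i = 0 := by
  unfold Bfix
  rcases Nat.eq_zero_or_pos (2 - i).toNat with h | h
  · rw [h]; rfl
  · obtain ⟨n, hn⟩ : ∃ n, (2 - i).toNat = n + 1 := ⟨(2 - i).toNat - 1, by omega⟩
    rw [hn, Function.iterate_succ_apply', step_apply_high d A _ i (le_of_lt hi),
      if_neg (by omega)]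

lemma Bfix_rec (d : C → C) (A : PDO C) (i : ℤ) (hi : i ≤ 0) :
    Bfix d A i = (2⁻¹ : ℚ) • (A (i + 1) - Rsum d (Bfix d A) (i + 1)) := by
  have h1 : Bfix d A i = (step d A)^[(1 - i).toNat + 1] (fun _ => 0) i :=
    Bfix_eq_iter d A (1 - i).toNat i (by omega) (by omega)
  rw [h1, Function.iterate_succ_apply', step_apply_low d A _ i (by omega)]
  congr 2
  refine (Rsum_congr _ _ _ _ fun j hj hj1 => ?_).symm
  have h2 : (1 - i).toNat = (-i).toNat + 1 := by omega
  rw [h2]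
  exact Bfix_eq_iter d A (-i).toNat j hj1 (by omega)

lemma Bfix_eqn (d : C → C) (A : PDO C) (m : ℤ) (hm : m ≤ 1) :
    (2 : ℚ) • Bfix d A (m - 1) + Rsum d (Bfix d A) m = A m := by
  have := Bfix_rec d A (m - 1) (by omega)
  rw [sub_add_cancel] at this
  rw [this, smul_smul]
  norm_num

section Comp

lemma d_zero (d : C → C) (hd_add : ∀ x y : C, d (x + y) = d x + d y) : d 0 = 0 := by
  have := hd_add 0 0
  rw [add_zero] at this
  exact (left_eq_add.mp this)

lemma d_iter_zero (d : C → C) (hd_add : ∀ x y : C, d (x + y) = d x + d y) (k : ℕ) : d^[k] 0 = 0 :=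
  Function.iterate_fixed (d_zero d hd_add) k

/-- The composition sum reduces to a finite sum over a box. -/
lemma comp_eq_finset (d : C → C) (hd_add : ∀ x y : C, d (x + y) = d x + d y) (B : PDO C) (hBtop : ∀ i : ℤ, 1 < i → B i = 0) (m : ℤ) :
    PDO.comp d B B m = ∑ pq ∈ Finset.Icc (m - 1) 1 ×ˢ Finset.Icc (m - 1) 1,
      term d B m pq := by
  have : PDO.comp d B B m = ∑ᶠ pq : ℤ × ℤ, term d B m pq := rfl
  rw [this]
  refine finsum_eq_sum_of_support_subset _ ?_
  intro pq hpq
  simp only [Function.mem_support, ne_eq] at hpq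
  simp only [Finset.coe_product, Set.mem_prod, Finset.mem_coe, Finset.mem_Icc]
  by_contra hcon
  apply hpq
  unfold term
  split_ifs with h
  · -- 0 ≤ p + q - m
    by_cases hp : 1 < pq.1
    · rw [hBtop pq.1 hp, zero_mul, smul_zero]
    · by_cases hq : 1 < pq.2
      · rw [hBtop pq.2 hq, d_iter_zero d hd_add, mul_zero, smul_zero]
      · exfalso; push_neg at hp hq; apply hcon; constructor <;> constructor <;> omega
  · rfl

lemma comp_top (d : C → C) (hd_add : ∀ x y : C, d (x + y) = d x + d y) (B : PDO C) (hBtop : ∀ i : ℤ, 1 < i → B i = 0) (m : ℤ) (hm : 2 < m) :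
    PDO.comp d B B m = 0 := by
  rw [comp_eq_finset d hd_add B hBtop m]
  have : Finset.Icc (m - 1) (1 : ℤ) = ∅ := Finset.Icc_eq_empty (by omega)
  rw [this]
  simp

lemma comp_two (d : C → C) (hd_add : ∀ x y : C, d (x + y) = d x + d y) (B : PDO C) (hB1 : B 1 = 1) (hBtop : ∀ i : ℤ, 1 < i → B i = 0) :
    PDO.comp d B B 2 = 1 := by
  rw [comp_eq_finset d hd_add B hBtop 2]
  have : Finset.Icc (2 - 1 : ℤ) 1 = {1} := by norm_num
  rw [this, Finset.singleton_product_singleton, Finset.sum_singleton]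
  unfold term
  norm_num [zbinom_zero, hB1]

lemma comp_low (d : C → C) (hd_add : ∀ x y : C, d (x + y) = d x + d y) (B : PDO C) (hB1 : B 1 = 1) (hBtop : ∀ i : ℤ, 1 < i → B i = 0)
    (m : ℤ) (hm : m ≤ 1) :
    PDO.comp d B B m = (2 : ℚ) • B (m - 1) + Rsum d B m := by
  rw [comp_eq_finset d hd_add B hBtop m]
  have hins : Finset.Icc (m - 1) (1 : ℤ) = insert (m - 1) (Finset.Icc m 1) := by
    ext x
    simp only [Finset.mem_Icc, Finset.mem_insert]
    omega
  have hnm : (m - 1) ∉ Finset.Icc m (1 : ℤ) := by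
    simp only [Finset.mem_Icc]; omega
  have h1mem : (1 : ℤ) ∈ Finset.Icc m 1 := by
    simp only [Finset.mem_Icc]; exact ⟨hm, le_refl 1⟩
  have hq0 : term d B m (m - 1, m - 1) = 0 := by
    unfold term
    rw [if_neg (by simp only; omega)]
  have e1 : (m - 1) + 1 - m = 0 := by ring
  have e2 : 1 + (m - 1) - m = 0 := by ring
  have T1 : ∑ q ∈ insert (m - 1) (Finset.Icc m 1), term d B m (m - 1, q) = B (m - 1) := by
    rw [Finset.sum_insert hnm, hq0, zero_add,
      Finset.sum_eq_single_of_mem 1 h1mem]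
    · simp [term, e1, zbinom_zero, hB1]
    · intro q hq hqne
      simp only [Finset.mem_Icc] at hq
      unfold term
      rw [if_neg (by simp only; omega)]
  have T2 : ∑ p ∈ Finset.Icc m 1, term d B m (p, m - 1) = B (m - 1) := by
    rw [Finset.sum_eq_single_of_mem 1 h1mem]
    · simp [term, e2, zbinom_zero, hB1]
    · intro p hp hpne
      simp only [Finset.mem_Icc] at hp
      unfold term
      rw [if_neg (by simp only; omega)]
  have hR : Rsum d B m = ∑ p ∈ Finset.Icc m 1, ∑ q ∈ Finset.Icc m 1, term d B m (p, q) := by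
    unfold Rsum
    rw [Finset.sum_product]
  rw [hins, Finset.sum_product, Finset.sum_insert hnm, T1]
  have : ∀ p ∈ Finset.Icc m (1 : ℤ),
      (∑ q ∈ insert (m - 1) (Finset.Icc m 1), term d B m (p, q))
        = term d B m (p, m - 1) + ∑ q ∈ Finset.Icc m 1, term d B m (p, q) := by
    intro p _
    rw [Finset.sum_insert hnm]
  rw [Finset.sum_congr rfl this, Finset.sum_add_distrib, T2, ← hR, two_smul, add_assoc]

end Comp

end Stmt10Aux

/-- In the algebra of pseudo-differential operators over a (possibly
noncommutative) coefficient `ℚ`-algebra `C` equipped with a derivation `d = ∂_x`, any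
operator of the form `A = ∂_x² + ∑_{i<2} a_i*∂_x^i` has a unique square root of the form
`B = ∂_x + ∑_{i<1} b_i*∂_x^i`, i.e. a unique such `B` with `B∘B = A`. -/
theorem stmt10 {C : Type} [Ring C] [Algebra ℚ C] (d : C → C)
    (hd_add : ∀ x y : C, d (x + y) = d x + d y)
    (hd_leibniz : ∀ x y : C, d (x * y) = d x * y + x * d y)
    (A : PDO C) (hA2 : A 2 = 1) (hAtop : ∀ i : ℤ, 2 < i → A i = 0) :
    ∃! B : PDO C, B 1 = 1 ∧ (∀ i : ℤ, 1 < i → B i = 0) ∧ PDO.comp d B B = A := by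
  classical
  set B₀ := Stmt10Aux.Bfix d A with hB₀
  have hB₀1 : B₀ 1 = 1 := Stmt10Aux.Bfix_one d A
  have hB₀top : ∀ i : ℤ, 1 < i → B₀ i = 0 := fun i hi => Stmt10Aux.Bfix_top d A i hi
  have hcompB₀ : PDO.comp d B₀ B₀ = A := by
    funext m
    rcases lt_trichotomy m 2 with hm | hm | hm
    · have hm1 : m ≤ 1 := by omega
      rw [Stmt10Aux.comp_low d hd_add B₀ hB₀1 hB₀top m hm1]
      exact Stmt10Aux.Bfix_eqn d A m hm1
    · subst hm
      rw [Stmt10Aux.comp_two d hd_add B₀ hB₀1 hB₀top, hA2]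
    · rw [Stmt10Aux.comp_top d hd_add B₀ hB₀top m hm, hAtop m hm]
  refine ⟨B₀, ⟨hB₀1, hB₀top, hcompB₀⟩, ?_⟩
  rintro B' ⟨hB'1, hB'top, hcompB'⟩
  -- uniqueness by downward induction
  have key : ∀ n : ℕ, ∀ i : ℤ, 1 - (n : ℤ) ≤ i → B' i = B₀ i := by
    intro n
    induction n with
    | zero =>
      intro i hi
      simp only [Nat.cast_zero, sub_zero] at hi
      rcases eq_or_lt_of_le hi with h | h
      · rw [← h, hB'1, hB₀1]
      · rw [hB'top i h, hB₀top i h]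
    | succ n ih =>
      intro i hi
      by_cases hin : 1 - (n : ℤ) ≤ i
      · exact ih i hin
      · have hieq : i = -(n : ℤ) := by push_cast at hi ⊢; omega
        have hm1 : i + 1 ≤ 1 := by omega
        have h1 : PDO.comp d B' B' (i + 1) = PDO.comp d B₀ B₀ (i + 1) := by
          rw [hcompB', hcompB₀]
        rw [Stmt10Aux.comp_low d hd_add B' hB'1 hB'top (i + 1) hm1,
          Stmt10Aux.comp_low d hd_add B₀ hB₀1 hB₀top (i + 1) hm1] at h1
        have hRs : Stmt10Aux.Rsum d B' (i + 1) = Stmt10Aux.Rsum d B₀ (i + 1) :=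
          Stmt10Aux.Rsum_congr d B' B₀ (i + 1) fun j hj hj1 => ih j (by omega)
        rw [hRs, add_left_inj] at h1
        have h2 : (2⁻¹ : ℚ) • ((2 : ℚ) • B' (i + 1 - 1))
            = (2⁻¹ : ℚ) • ((2 : ℚ) • B₀ (i + 1 - 1)) := by rw [h1]
        rw [smul_smul, smul_smul] at h2
        norm_num at h2
        exact h2
  funext i
  exact key (1 - i).toNat i (by omega)

end
end

section
/- Let Γ be a stable graph of genus g with n legs, let A = (a_1,...,a_n) ∈ ℤ^n with ∑a_i = 0, and let r ≥ 1. A weighting mod r of Γ is a function w: H(Γ) → {0,...,r-1} such that w(l_i) ≡ a_i mod r for each leg, w(h)+w(h') ≡ 0 mod r for each edge {h,h'}, and ∑_{h: v(h)=v} w(h) ≡ 0 mod r at each vertex v. Then the number of weightings mod r of Γ equals r^{h^1(Γ)}. -/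
theorem free_involutive_decomp {S : Type} [Fintype S] [DecidableEq S] (σ : S → S)
    (hσ : Function.Involutive σ) (hfix : ∀ s, σ s ≠ s) :
    ∃ (Q : Type) (_ : Fintype Q) (rep : Q → S) (cl : S → Q),
      (∀ q, cl (rep q) = q) ∧
      (∀ s, rep (cl s) = s ∨ rep (cl s) = σ s) ∧
      (∀ s, cl (σ s) = cl s) ∧
      Fintype.card S = 2 * Fintype.card Q ∧
      (∀ (M : Type) (_ : AddCommMonoid M) (f : S → M),
        ∑ s, f s = ∑ q, (f (rep q) + f (σ (rep q)))) := by
  classical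
  let st : Setoid S :=
    { r := fun x y => y = x ∨ y = σ x
      iseqv := by
        refine ⟨fun x => Or.inl rfl, ?_, ?_⟩
        · rintro x y (rfl | rfl)
          · exact Or.inl rfl
          · exact Or.inr (hσ x).symm
        · rintro x y z (rfl | rfl) h
          · exact h
          · rcases h with rfl | rfl
            · exact Or.inr rfl
            · exact Or.inl (hσ x) }
  letI : Fintype (Quotient st) := @Quotient.fintype S _ st (fun a b => Classical.dec _)
  have hout : ∀ s : S, Quotient.out (Quotient.mk st s) = s ∨
      Quotient.out (Quotient.mk st s) = σ s := by
    intro s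
    rcases Quotient.mk_out (s := st) s with h | h
    · exact Or.inl h.symm
    · right
      have := congrArg σ h
      rw [hσ] at this
      exact this.symm
  have key : Function.Bijective (fun p : Quotient st × Bool =>
      if p.2 then (Quotient.out p.1) else σ (Quotient.out p.1)) := by
    constructor
    · rintro ⟨q, b⟩ ⟨q', b'⟩ h
      simp only at h
      have hq : q = q' := by
        have c1 : Quotient.mk st (if b then Quotient.out q else σ (Quotient.out q)) = q := by
          cases b <;> simp only [if_true, if_false, Bool.false_eq_true]
          · exact (Quotient.sound (Or.inr (hσ _).symm)).trans (Quotient.out_eq q)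
          · exact Quotient.out_eq q
        have c2 : Quotient.mk st (if b' then Quotient.out q' else σ (Quotient.out q')) = q' := by
          cases b' <;> simp only [if_true, if_false, Bool.false_eq_true]
          · exact (Quotient.sound (Or.inr (hσ _).symm)).trans (Quotient.out_eq q')
          · exact Quotient.out_eq q'
        rw [← c1, ← c2, h]
      subst hq
      cases b <;> cases b' <;> simp only [if_true, if_false, Bool.false_eq_true] at h ⊢
      · exact absurd h (hfix _)
      · exact absurd h.symm (hfix _)
    · intro s
      rcases hout s with h | h
      · exact ⟨(Quotient.mk st s, true), h⟩
      · refine ⟨(Quotient.mk st s, false), ?_⟩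
        show σ (Quotient.out (Quotient.mk st s)) = s
        rw [h, hσ]
  let e := Equiv.ofBijective _ key
  have he : ∀ p, e p = if p.2 then (Quotient.out p.1) else σ (Quotient.out p.1) := fun _ => rfl
  refine ⟨Quotient st, inferInstance, Quotient.out, Quotient.mk st, ?_, hout, ?_, ?_, ?_⟩
  · exact fun q => Quotient.out_eq q
  · intro s
    exact Quotient.sound (Or.inr (hσ s).symm)
  · have := Fintype.card_congr e
    simp only [Fintype.card_prod, Fintype.card_bool] at this
    omega
  · intro M _ f
    rw [← Equiv.sum_comp e f, Fintype.sum_prod_type]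
    refine Finset.sum_congr rfl fun q _ => ?_
    rw [Fintype.sum_bool, he, he]
    simp

/-- Let `Γ` be a stable graph of genus `g` with `n` legs (vertices `V` with
genera `gV`, half-edges `H` with vertex map `vtx` and involution `ι` whose fixed points are
the legs, in bijection with `{1,…,n}`, and whose 2-orbits are the edges; `(V,E)` connected),
let `A = (a_1,…,a_n) ∈ ℤⁿ` with `∑ a_i = 0`, and let `r ≥ 1`.  A weighting mod `r` of `Γ` is a
function `w : H → ℤ/r` such that `w(l_i) ≡ a_i` for each leg, `w(h) + w(ι h) ≡ 0` for each
edge, and `∑_{h : vtx h = v} w(h) ≡ 0` at each vertex `v`.  Then the number of weightings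
mod `r` of `Γ` equals `r^{h¹(Γ)}`, where `h¹(Γ) = |E| - |V| + 1`. -/
theorem stmt12 (V H : Type) [Fintype V] [Fintype H] [DecidableEq V] [DecidableEq H]
    [Nonempty V]
    (gV : V → ℕ) (vtx : H → V) (ι : H → H) (hι : Function.Involutive ι)
    -- connectedness of the graph `(V, E)`
    (hconn : ∀ v w : V, Relation.EqvGen
      (fun x y => ∃ h : H, ι h ≠ h ∧ vtx h = x ∧ vtx (ι h) = y) v w)
    -- stability at each vertex: `2 g(v) - 2 + n(v) > 0`
    (hstab : ∀ v : V, 2 < 2 * gV v + Fintype.card {h : H // vtx h = v})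
    -- the legs, in bijection with `{1,…,n}`, with double ramification data `A`
    (n : ℕ) (legs : Fin n ≃ {h : H // ι h = h}) (A : Fin n → ℤ) (hA : ∑ i, A i = 0)
    (r : ℕ) (hr : 1 ≤ r) :
    Nat.card {w : H → ZMod r //
        (∀ i : Fin n, w (legs i) = (A i : ZMod r)) ∧
        (∀ h : H, ι h ≠ h → w h + w (ι h) = 0) ∧
        (∀ v : V, ∑ h ∈ Finset.univ.filter (fun h => vtx h = v), w h = 0)} =
      r ^ (Fintype.card {h : H // ι h ≠ h} / 2 + 1 - Fintype.card V) := by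
  classical
  rcases eq_or_lt_of_le hr with hr1 | h1r
  · -- trivial case r = 1
    haveI : Subsingleton (ZMod r) := by rw [← hr1]; infer_instance
    haveI : Unique {w : H → ZMod r //
        (∀ i : Fin n, w (legs i) = (A i : ZMod r)) ∧
        (∀ h : H, ι h ≠ h → w h + w (ι h) = 0) ∧
        (∀ v : V, ∑ h ∈ Finset.univ.filter (fun h => vtx h = v), w h = 0)} :=
      { default := ⟨fun _ => 0,
          ⟨fun _ => Subsingleton.elim _ _, fun _ _ => Subsingleton.elim _ _,
            fun _ => Subsingleton.elim _ _⟩⟩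
        uniq := fun w => Subtype.ext (funext fun h => Subsingleton.elim _ _) }
    rw [Nat.card_unique, ← hr1, one_pow]
  haveI : NeZero r := ⟨by omega⟩
  set R := ZMod r with hRdef
  -- the free involution on non-fixed half-edges
  let S := {h : H // ι h ≠ h}
  let σ : S → S := fun s => ⟨ι s.1, by
    intro hcon
    rw [hι s.1] at hcon
    exact s.2 hcon.symm⟩
  have hσinv : Function.Involutive σ := fun s => Subtype.ext (hι s.1)
  have hσfix : ∀ s, σ s ≠ s := fun s hcon => s.2 (congrArg Subtype.val hcon)
  obtain ⟨Q, instQ, rep, cl, hcl_rep, hrep_cl, hclσ, hcardS, hsum⟩ :=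
    free_involutive_decomp σ hσinv hσfix
  letI := instQ
  -- the subgroup of "edge" weightings
  let Msub : AddSubgroup (H → R) :=
    { carrier := {w | (∀ h, ι h = h → w h = 0) ∧ ∀ h, w h + w (ι h) = 0}
      add_mem' := by
        rintro w u ⟨hw1, hw2⟩ ⟨hu1, hu2⟩
        refine ⟨fun h hh => by
          show w h + u h = 0
          rw [hw1 h hh, hu1 h hh, add_zero], fun h => ?_⟩
        show (w h + u h) + (w (ι h) + u (ι h)) = 0
        rw [add_add_add_comm, hw2 h, hu2 h, add_zero]
      zero_mem' := ⟨fun _ _ => rfl, fun _ => by simp⟩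
      neg_mem' := by
        rintro w ⟨hw1, hw2⟩
        refine ⟨fun h hh => by show -(w h) = 0; rw [hw1 h hh, neg_zero], fun h => ?_⟩
        show -(w h) + -(w (ι h)) = 0
        rw [← neg_add, hw2 h, neg_zero] }
  -- boundary and total-sum homomorphisms
  let d : (H → R) →+ (V → R) :=
    { toFun := fun w v => ∑ h ∈ Finset.univ.filter (fun h => vtx h = v), w h
      map_zero' := by funext v; simp
      map_add' := by
        intro w u
        funext v
        exact Finset.sum_add_distrib }
  let T : (V → R) →+ R :=
    { toFun := fun f => ∑ v, f v
      map_zero' := by simp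
      map_add' := fun f g => Finset.sum_add_distrib }
  have key0 : ∀ w : H → R, T (d w) = ∑ h, w h := fun w =>
    Finset.sum_fiberwise Finset.univ vtx w
  have split : ∀ w : H → R, ∑ h, w h =
      (∑ h ∈ Finset.univ.filter (fun h => ι h = h), w h) + ∑ s : S, w s.1 := by
    intro w
    rw [← Finset.sum_filter_add_sum_filter_not Finset.univ (fun h => ι h = h) w]
    congr 1
    exact Finset.sum_subtype _ (fun x => by simp) (fun h => w h)
  have key1 : ∀ w : H → R, w ∈ Msub → ∑ h, w h = 0 := by
    rintro w ⟨hw1, hw2⟩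
    rw [split w]
    have t1 : ∑ h ∈ Finset.univ.filter (fun h => ι h = h), w h = 0 :=
      Finset.sum_eq_zero fun h hh => hw1 h (by simpa using hh)
    have t2 : ∑ s : S, w s.1 = 0 := by
      rw [hsum R inferInstance (fun s => w s.1)]
      exact Finset.sum_eq_zero fun q _ => hw2 (rep q).1
    rw [t1, t2, add_zero]
  have dsingle : ∀ (h : H) (c : R), d (Pi.single h c) = Pi.single (vtx h) c := by
    intro h c
    funext v
    show ∑ h' ∈ Finset.univ.filter (fun h' => vtx h' = v), Pi.single h c h' = _
    rw [Finset.sum_congr rfl (fun h' _ => Pi.single_apply h c h'), Finset.sum_ite_eq',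
      Pi.single_apply]
    simp [eq_comm]
  -- surjectivity step along the connectedness relation
  have step : ∀ x y : V, Relation.EqvGen
      (fun x y => ∃ h : H, ι h ≠ h ∧ vtx h = x ∧ vtx (ι h) = y) x y →
      ∀ c : R, ∃ u, u ∈ Msub ∧ d u = Pi.single y c - Pi.single x c := by
    intro x y hxy
    induction hxy with
    | rel x y hrel =>
      intro c
      obtain ⟨h, hne, hx, hy⟩ := hrel
      refine ⟨Pi.single (ι h) c - Pi.single h c, ⟨?_, ?_⟩, ?_⟩
      · intro h' hh'
        have n1 : h' ≠ h := fun e => hne (e ▸ hh')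
        have n2 : h' ≠ ι h := by
          intro e
          subst e
          rw [hι h] at hh'
          exact hne hh'.symm
        rw [Pi.sub_apply, Pi.single_eq_of_ne n2, Pi.single_eq_of_ne n1, sub_zero]
      · intro h''
        simp only [Pi.sub_apply, Pi.single_apply]
        have e2 : (ι h'' = h) ↔ (h'' = ι h) := by rw [hι.eq_iff]
        simp only [hι.injective.eq_iff, e2]
        ring
      · rw [map_sub, dsingle, dsingle, hx, hy]
    | refl x =>
      intro c
      exact ⟨0, Msub.zero_mem, by rw [map_zero, sub_self]⟩
    | symm x y _ ih =>
      intro c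
      obtain ⟨u, hu, hdu⟩ := ih c
      exact ⟨-u, Msub.neg_mem hu, by rw [map_neg, hdu, neg_sub]⟩
    | trans x y z _ _ ih1 ih2 =>
      intro c
      obtain ⟨u1, hu1, hd1⟩ := ih1 c
      obtain ⟨u2, hu2, hd2⟩ := ih2 c
      exact ⟨u1 + u2, Msub.add_mem hu1 hu2, by rw [map_add, hd1, hd2]; abel⟩
  -- surjectivity onto sum-zero functions
  have key2 : ∀ f : V → R, T f = 0 → ∃ u, u ∈ Msub ∧ d u = f := by
    intro f hf
    obtain ⟨v0⟩ := ‹Nonempty V›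
    choose u hu hdu using fun v => step v0 v (hconn v0 v) (f v)
    refine ⟨∑ v, u v, AddSubgroup.sum_mem Msub (fun v _ => hu v), ?_⟩
    rw [map_sum, Finset.sum_congr rfl (fun v _ => hdu v), Finset.sum_sub_distrib,
      Finset.univ_sum_single]
    have hs : ∑ v, (Pi.single v0 (f v) : V → R) = Pi.single v0 (∑ v, f v) := by
      funext x
      rw [Finset.sum_apply]
      by_cases hx : x = v0
      · subst hx
        simp [Pi.single_eq_same]
      · simp [Pi.single_eq_of_ne hx]
    have hTf : ∑ v, f v = 0 := hf
    rw [hs, hTf, Pi.single_zero, sub_zero]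
  -- a particular weighting with the right leg values
  let w1 : H → R := fun h => if hh : ι h = h then ((A (legs.symm ⟨h, hh⟩) : ℤ) : R) else 0
  have hw1leg : ∀ i, w1 (legs i).1 = ((A i : ℤ) : R) := by
    intro i
    have hfix : ι (legs i).1 = (legs i).1 := (legs i).2
    have : w1 (legs i).1 = ((A (legs.symm ⟨(legs i).1, hfix⟩) : ℤ) : R) := dif_pos hfix
    rw [this]
    congr 2
    rw [show (⟨(legs i).1, hfix⟩ : {h // ι h = h}) = legs i from Subtype.ext rfl,
      Equiv.symm_apply_apply]
  have hsum1 : ∑ h, w1 h = 0 := by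
    rw [split w1]
    have t2 : ∑ s : S, w1 s.1 = 0 := Finset.sum_eq_zero fun s _ => dif_neg s.2
    have t1 : ∑ h ∈ Finset.univ.filter (fun h => ι h = h), w1 h = ∑ i, ((A i : ℤ) : R) := by
      rw [Finset.sum_subtype (p := fun h => ι h = h) _ (fun x => by simp) w1]
      rw [← Equiv.sum_comp legs (fun l : {h // ι h = h} => w1 l.1)]
      exact Finset.sum_congr rfl fun i _ => hw1leg i
    rw [t1, t2, add_zero, ← Int.cast_sum, hA, Int.cast_zero]
  obtain ⟨u0, hu0M, hdu0⟩ := key2 (-(d w1)) (by rw [map_neg, key0, hsum1, neg_zero])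
  let w0 : H → R := w1 + u0
  have hw0leg : ∀ i, w0 (legs i).1 = ((A i : ℤ) : R) := by
    intro i
    show w1 (legs i).1 + u0 (legs i).1 = _
    rw [hw1leg i, hu0M.1 _ (legs i).2, add_zero]
  have hw0edge : ∀ h, ι h ≠ h → w0 h + w0 (ι h) = 0 := by
    intro h hne
    show (w1 h + u0 h) + (w1 (ι h) + u0 (ι h)) = 0
    have e1 : w1 h = 0 := dif_neg hne
    have e2 : w1 (ι h) = 0 := by
      refine dif_neg ?_
      intro e
      rw [hι h] at e
      exact hne e.symm
    rw [e1, e2, zero_add, zero_add]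
    exact hu0M.2 h
  have hw0vtx : d w0 = 0 := by
    show d (w1 + u0) = 0
    rw [map_add, hdu0, add_neg_cancel]
  -- the subgroup of solutions of the homogeneous system
  let K : AddSubgroup (H → R) := Msub ⊓ d.ker
  -- the solution set is a coset of K
  have cardSol : Nat.card {w : H → R //
        (∀ i : Fin n, w (legs i) = ((A i : ℤ) : R)) ∧
        (∀ h : H, ι h ≠ h → w h + w (ι h) = 0) ∧
        (∀ v : V, ∑ h ∈ Finset.univ.filter (fun h => vtx h = v), w h = 0)} =
      Nat.card K := by
    refine Nat.card_congr ⟨fun w => ⟨w.1 - w0, ?_⟩, fun u => ⟨w0 + u.1, ?_, ?_, ?_⟩, ?_, ?_⟩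
    · obtain ⟨wf, hleg, hedge, hvtx⟩ := w
      have hlegz : ∀ h, ι h = h → wf h - w0 h = 0 := by
        intro h hh
        have e1 : legs (legs.symm ⟨h, hh⟩) = ⟨h, hh⟩ := Equiv.apply_symm_apply _ _
        have e2 : wf h = ((A (legs.symm ⟨h, hh⟩) : ℤ) : R) := by
          have := hleg (legs.symm ⟨h, hh⟩)
          rwa [e1] at this
        have e3 : w0 h = ((A (legs.symm ⟨h, hh⟩) : ℤ) : R) := by
          have := hw0leg (legs.symm ⟨h, hh⟩)
          rwa [e1] at this
        show wf h - w0 h = 0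
        rw [e2, e3, sub_self]
      refine AddSubgroup.mem_inf.2 ⟨⟨hlegz, ?_⟩, ?_⟩
      · intro h
        by_cases hh : ι h = h
        · show (wf h - w0 h) + (wf (ι h) - w0 (ι h)) = 0
          rw [hh, hlegz h hh, add_zero]
        · show (wf h - w0 h) + (wf (ι h) - w0 (ι h)) = 0
          have a1 := hedge h hh
          have a2 := hw0edge h hh
          linear_combination a1 - a2
      · show wf - w0 ∈ d.ker
        rw [AddMonoidHom.mem_ker, map_sub, hw0vtx, sub_zero]
        funext v
        exact hvtx v
    · intro i
      obtain ⟨hM, hker⟩ := AddSubgroup.mem_inf.1 u.2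
      show w0 (legs i).1 + u.1 (legs i).1 = _
      rw [hw0leg i, hM.1 _ (legs i).2, add_zero]
    · intro h hh
      obtain ⟨hM, hker⟩ := AddSubgroup.mem_inf.1 u.2
      show (w0 h + u.1 h) + (w0 (ι h) + u.1 (ι h)) = 0
      rw [add_add_add_comm, hw0edge h hh, hM.2 h, add_zero]
    · intro v
      obtain ⟨hM, hker⟩ := AddSubgroup.mem_inf.1 u.2
      rw [AddMonoidHom.mem_ker] at hker
      have hz : d (w0 + u.1) v = 0 := by
        rw [map_add, hker, add_zero, hw0vtx]
        rfl
      exact hz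
    · intro w
      apply Subtype.ext
      show w0 + (w.1 - w0) = w.1
      abel
    · intro u
      apply Subtype.ext
      show (w0 + u.1) - w0 = u.1
      abel
  -- cardinality of Msub
  have cardM : Nat.card Msub = r ^ Fintype.card Q := by
    let Psi : (Q → R) → (H → R) := fun f h => if hh : ι h = h then 0 else
      (if rep (cl ⟨h, hh⟩) = ⟨h, hh⟩ then f (cl ⟨h, hh⟩) else - f (cl ⟨h, hh⟩))
    have hPsi0 : ∀ (f : Q → R) (h : H), ι h = h → Psi f h = 0 := fun f h hh => dif_pos hh
    have hPsi : ∀ (f : Q → R) (s : S),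
        Psi f s.1 = if rep (cl s) = s then f (cl s) else - f (cl s) := by
      rintro f ⟨h, hh⟩
      exact dif_neg hh
    have hPsipair : ∀ (f : Q → R) (s : S), Psi f s.1 + Psi f (ι s.1) = 0 := by
      intro f s
      have h2 : Psi f (ι s.1) = if rep (cl s) = σ s then f (cl s) else - f (cl s) := by
        have h3 := hPsi f (σ s)
        rwa [hclσ s] at h3
      rcases hrep_cl s with hr1 | hr1
      · rw [hPsi f s, if_pos hr1, h2,
          if_neg (fun e => hσfix s (by rw [← e, hr1])), add_neg_cancel]
      · rw [hPsi f s, if_neg (fun e => hσfix s (by rw [← hr1]; exact e)), h2,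
          if_pos hr1, neg_add_cancel]
    have hinvmem : ∀ f : Q → R, Psi f ∈ Msub := by
      intro f
      refine ⟨fun h hh => hPsi0 f h hh, fun h => ?_⟩
      by_cases hh : ι h = h
      · rw [hh, hPsi0 f h hh, add_zero]
      · exact hPsipair f ⟨h, hh⟩
    have eqv : Msub ≃ (Q → R) :=
      { toFun := fun w q => w.1 (rep q).1
        invFun := fun f => ⟨Psi f, hinvmem f⟩
        left_inv := by
          rintro ⟨wf, hw1, hw2⟩
          apply Subtype.ext
          funext h
          show Psi (fun q => wf (rep q).1) h = wf h
          by_cases hh : ι h = h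
          · rw [hw1 h hh]
            exact hPsi0 (fun q => wf (rep q).1) h hh
          · have hv := hPsi (fun q => wf (rep q).1) ⟨h, hh⟩
            rcases hrep_cl ⟨h, hh⟩ with hr1 | hr1
            · rw [hv, if_pos hr1, hr1]
            · have hne : rep (cl ⟨h, hh⟩) ≠ ⟨h, hh⟩ := by
                rw [hr1]
                exact fun e => hσfix _ e
              rw [hv, if_neg hne, hr1]
              exact neg_eq_of_add_eq_zero_left (hw2 h)
        right_inv := by
          intro f
          funext q
          show Psi f (rep q).1 = f q
          have hv := hPsi f (rep q)
          rw [hcl_rep q] at hv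
          rw [hv, if_pos rfl] }
    rw [Nat.card_congr eqv, Nat.card_eq_fintype_card, Fintype.card_fun, ZMod.card]
  -- cardinality of the sum-zero subgroup
  have Tsurj : Function.Surjective T := by
    intro c
    obtain ⟨v0⟩ := ‹Nonempty V›
    refine ⟨Pi.single v0 c, ?_⟩
    show ∑ v, Pi.single v0 c v = c
    rw [Finset.sum_pi_single']
    simp
  have cardZrel : r ^ Fintype.card V = r * Nat.card T.ker := by
    have h1 := AddSubgroup.card_eq_card_quotient_mul_card_addSubgroup T.ker
    rw [Nat.card_congr (QuotientAddGroup.quotientKerEquivOfSurjective T Tsurj).toEquiv] at h1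
    rw [Nat.card_eq_fintype_card, Fintype.card_fun, ZMod.card] at h1
    rw [show Nat.card R = r from by rw [Nat.card_eq_fintype_card, ZMod.card]] at h1
    exact h1
  -- corestricted boundary map
  let D : Msub →+ (V → R) := d.comp Msub.subtype
  have hDT : ∀ m : Msub, T (D m) = 0 := by
    intro m
    show T (d m.1) = 0
    rw [key0]
    exact key1 m.1 m.2
  let D' : Msub →+ T.ker := D.codRestrict T.ker (fun m => by
    rw [AddMonoidHom.mem_ker]; exact hDT m)
  have D'surj : Function.Surjective D' := by
    rintro ⟨f, hf⟩
    rw [AddMonoidHom.mem_ker] at hf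
    obtain ⟨u, huM, hdu⟩ := key2 f hf
    exact ⟨⟨u, huM⟩, Subtype.ext hdu⟩
  have cardMrel : r ^ Fintype.card Q = Nat.card T.ker * Nat.card D'.ker := by
    have h1 := AddSubgroup.card_eq_card_quotient_mul_card_addSubgroup D'.ker
    rw [Nat.card_congr (QuotientAddGroup.quotientKerEquivOfSurjective D' D'surj).toEquiv] at h1
    rw [cardM] at h1
    exact h1
  have cardK : Nat.card K = Nat.card D'.ker := by
    refine Nat.card_congr ⟨fun u => ⟨⟨u.1, (AddSubgroup.mem_inf.1 u.2).1⟩, ?_⟩,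
      fun m => ⟨m.1.1, ?_⟩, ?_, ?_⟩
    · rw [AddMonoidHom.mem_ker]
      apply Subtype.ext
      show d u.1 = 0
      have hk := (AddSubgroup.mem_inf.1 u.2).2
      rwa [AddMonoidHom.mem_ker] at hk
    · refine AddSubgroup.mem_inf.2 ⟨m.1.2, ?_⟩
      rw [AddMonoidHom.mem_ker]
      have hk := m.2
      rw [AddMonoidHom.mem_ker] at hk
      exact congrArg Subtype.val hk
    · intro u
      apply Subtype.ext
      rfl
    · intro m
      apply Subtype.ext
      apply Subtype.ext
      rfl
  -- final arithmetic
  have main : Nat.card D'.ker * r ^ Fintype.card V = r ^ (Fintype.card Q + 1) := by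
    rw [cardZrel, pow_succ, cardMrel]
    ring
  have hle : Fintype.card V ≤ Fintype.card Q + 1 := by
    have hdvd : r ^ Fintype.card V ∣ r ^ (Fintype.card Q + 1) := by
      refine ⟨Nat.card D'.ker, ?_⟩
      rw [← main, mul_comm]
    exact (Nat.pow_dvd_pow_iff_le_right h1r).mp hdvd
  have final : Nat.card D'.ker = r ^ (Fintype.card Q + 1 - Fintype.card V) := by
    have hp : 0 < r ^ Fintype.card V := Nat.pow_pos hr
    have h2 : r ^ (Fintype.card Q + 1)
        = r ^ (Fintype.card Q + 1 - Fintype.card V) * r ^ Fintype.card V := by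
      rw [← pow_add, Nat.sub_add_cancel hle]
    apply Nat.eq_of_mul_eq_mul_right hp
    rw [main, h2]
  have hexp : Fintype.card {h : H // ι h ≠ h} / 2 + 1 - Fintype.card V
      = Fintype.card Q + 1 - Fintype.card V := by
    rw [hcardS, Nat.mul_div_cancel_left _ two_pos]
  rw [hexp]
  exact cardSol.trans (cardK.trans final)
end
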